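/- Let G* be the direct limit of a directed system of CSA-groups Gᵢ with injective transition maps, and let M be a maximal abelian subgroup of G*. Then for each i, the intersection Gᵢ ∩ M (under the canonical map) is either trivial or a maximal abelian subgroup of Gᵢ, and M is the union (direct limit) of these intersections. -/

import Mathlib

/-- A maximal abelian subgroup: abelian and maximal among abelian subgroups. -/
def IsMaximalAbelian {G : Type*} [Group G] (M : Subgroup G) : Prop :=
  IsMulCommutative M ∧ ∀ N : Subgroup G, IsMulCommutative N → M ≤ N → N = M

/-- A subgroup `H` is malnormal (conjugately separated): `H ∩ H^x = 1` for `x ∉ H`. -/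
def IsMalnormal {G : Type*} [Group G] (H : Subgroup G) : Prop :=
  ∀ x : G, x ∉ H → ∀ g ∈ H, x⁻¹ * g * x ∈ H → g = 1

/-- A CSA-group: all maximal abelian subgroups are malnormal. -/
def IsCSA (G : Type*) [Group G] : Prop :=
  ∀ M : Subgroup G, IsMaximalAbelian M → IsMalnormal M

/-- Commutation is transitive on nontrivial elements. -/
def CommTrans (G : Type*) [Group G] : Prop :=
  ∀ a b c : G, a ≠ 1 → b ≠ 1 → c ≠ 1 → Commute a b → Commute b c → Commute a c

/-- Every commutative subgroup is contained in a maximal abelian subgroup (Zorn). -/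
theorem exists_maximalAbelian_ge {G : Type*} [Group G] (K : Subgroup G)
    (hK : IsMulCommutative K) : ∃ M : Subgroup G, K ≤ M ∧ IsMaximalAbelian M := by
  obtain ⟨M, hKM, hMs, hmax⟩ :=
    zorn_le_nonempty₀ {L : Subgroup G | IsMulCommutative L} (fun c hcs hc y hy => by
      refine ⟨sSup c, ?_, fun z hz => le_sSup hz⟩
      refine ⟨⟨fun u v => ?_⟩⟩
      obtain ⟨K₁, hK₁c, hxK₁⟩ :=
        (Subgroup.mem_sSup_of_directedOn ⟨y, hy⟩ hc.directedOn).1 u.2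
      obtain ⟨K₂, hK₂c, hyK₂⟩ :=
        (Subgroup.mem_sSup_of_directedOn ⟨y, hy⟩ hc.directedOn).1 v.2
      obtain ⟨K₃, hK₃c, h₁₃, h₂₃⟩ := hc.directedOn K₁ hK₁c K₂ hK₂c
      haveI : IsMulCommutative K₃ := hcs hK₃c
      exact Subtype.ext (Subgroup.mul_comm_of_mem_isMulCommutative K₃ (h₁₃ hxK₁) (h₂₃ hyK₂)))
    K hK
  exact ⟨M, hKM, hMs, fun N hN hMN => le_antisymm (hmax hN hMN) hMN⟩

theorem isCSA_commTrans {G : Type*} [Group G] (h : IsCSA G) : CommTrans G := by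
  intro a b c ha hb hc hab hbc
  obtain ⟨M, hbM, hM⟩ := exists_maximalAbelian_ge (Subgroup.zpowers b)
    (Subgroup.zpowers_isMulCommutative b)
  have hbM' : b ∈ M := hbM (Subgroup.mem_zpowers b)
  have hmal := h M hM
  have haM : a ∈ M := by
    by_contra haM
    exact hb (hmal a haM b hbM' (by
      rw [show a⁻¹ * b * a = b by
        rw [mul_assoc, ← hab.eq, ← mul_assoc, inv_mul_cancel, one_mul]]
      exact hbM'))
  have hcM : c ∈ M := by
    by_contra hcM
    exact hb (hmal c hcM b hbM' (by
      rw [show c⁻¹ * b * c = b by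
        rw [mul_assoc, hbc.eq, ← mul_assoc, inv_mul_cancel, one_mul]]
      exact hbM'))
  haveI := hM.1
  exact Subgroup.mul_comm_of_mem_isMulCommutative M haM hcM

theorem stmt_17 {G : Type*} [Group G] {ι : Type*} (H : ι → Subgroup G)
    (hdir : Directed (· ≤ ·) H) (hcsa : ∀ i, IsCSA (H i))
    (hcover : ∀ g : G, ∃ i, g ∈ H i)
    (M : Subgroup G) (hM : IsMaximalAbelian M) :
    (∀ i, Subgroup.comap (H i).subtype M = ⊥ ∨
      IsMaximalAbelian (Subgroup.comap (H i).subtype M)) ∧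
    M = ⨆ i, H i ⊓ M := by
  have hCT : CommTrans G := by
    intro a b c ha hb hc hab hbc
    obtain ⟨i, hai⟩ := hcover a
    obtain ⟨j, hbj⟩ := hcover b
    obtain ⟨k, hck⟩ := hcover c
    obtain ⟨l, hil, hjl⟩ := hdir i j
    obtain ⟨m, hlm, hkm⟩ := hdir l k
    have hal : a ∈ H m := hlm (hil hai)
    have hbl : b ∈ H m := hlm (hjl hbj)
    have hcl : c ∈ H m := hkm hck
    have key : Commute (⟨a, hal⟩ : H m) ⟨c, hcl⟩ := by
      refine isCSA_commTrans (hcsa m) _ ⟨b, hbl⟩ _ ?_ ?_ ?_ ?_ ?_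
      · exact fun h => ha (by simpa using congrArg Subtype.val h)
      · exact fun h => hb (by simpa using congrArg Subtype.val h)
      · exact fun h => hc (by simpa using congrArg Subtype.val h)
      · exact Subtype.ext hab
      · exact Subtype.ext hbc
    exact congrArg Subtype.val key
  -- key fact: if a ∈ M is nontrivial, then M is the centralizer of a
  have hcent : ∀ a : G, a ∈ M → a ≠ 1 → M = Subgroup.centralizer {a} := by
    intro a haM ha
    haveI := hM.1
    have hcomm : IsMulCommutative (Subgroup.centralizer {a}) := by
      refine ⟨⟨fun x y => ?_⟩⟩
      rcases eq_or_ne (x : G) 1 with hx | hx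
      · exact Subtype.ext (by push_cast; rw [hx, one_mul, mul_one])
      rcases eq_or_ne (y : G) 1 with hy | hy
      · exact Subtype.ext (by push_cast; rw [hy, one_mul, mul_one])
      have hxa : Commute (x : G) a :=
        Subgroup.mem_centralizer_singleton_iff.1 x.2
      have hay : Commute a (y : G) :=
        (Subgroup.mem_centralizer_singleton_iff.1 y.2).symm
      exact Subtype.ext (hCT x a y hx ha hy hxa hay)
    have hle : M ≤ Subgroup.centralizer {a} := fun m hm =>
      Subgroup.mem_centralizer_singleton_iff.2
        (Subgroup.mul_comm_of_mem_isMulCommutative M hm haM)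
    exact (hM.2 _ hcomm hle).symm
  constructor
  · intro i
    rw [or_iff_not_imp_left]
    intro hne
    obtain ⟨a, ha1⟩ := Subgroup.ne_bot_iff_exists_ne_one.1 hne
    have haM : ((a : H i) : G) ∈ M := a.2
    have haG : ((a : H i) : G) ≠ 1 := by
      intro h
      exact ha1 (Subtype.ext (Subtype.ext h))
    haveI := hM.1
    constructor
    · refine ⟨⟨fun x y => ?_⟩⟩
      exact Subtype.ext (Subtype.ext
        (Subgroup.mul_comm_of_mem_isMulCommutative M x.2 y.2))
    · intro N hN hle
      refine le_antisymm (fun b hb => ?_) hle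
      rcases eq_or_ne b 1 with rfl | hb1
      · exact Subgroup.one_mem _
      have hbG : ((b : H i) : G) ≠ 1 := by
        intro h
        exact hb1 (Subtype.ext h)
      haveI := hN
      have hab : Commute ((a : H i) : G) ((b : H i) : G) := by
        have : Commute ((a : H i)) ((b : H i)) :=
          Subgroup.mul_comm_of_mem_isMulCommutative N (hle a.2) hb
        exact congrArg Subtype.val this
      have : ((b : H i) : G) ∈ M := by
        rw [hcent _ haM haG]
        exact Subgroup.mem_centralizer_singleton_iff.2 hab.symm
      exact this
  · refine le_antisymm (fun g hg => ?_) (iSup_le fun i => inf_le_right)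
    obtain ⟨i, hi⟩ := hcover g
    exact Subgroup.mem_iSup_of_mem i ⟨hi, hg⟩
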